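/- Reciprocal-cardinality bound for B-typical sets: for every ε > 0 there exists N such that for all n ≥ N and every sequence u⃗ ∈ B^n_{V,ε}(U), one has 1/|B^n_{V,ε}(U)| ≤ 2^{3nε}·p(u⃗). -/

import Mathlib

open Real
open scoped BigOperators Classical

noncomputable section

/-- Probability of a length-`n` sequence under the i.i.d. product of the pmf `p`. -/
def seqProb {α : Type*} (p : α → ℝ) {n : ℕ} (u : Fin n → α) : ℝ :=
  ∏ i, p (u i)

/-- Entropy in bits of a pmf on a finite alphabet. -/
def ent {α : Type*} [Fintype α] (p : α → ℝ) : ℝ :=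
  -∑ a, p a * logb 2 (p a)

variable {U V : Type*} [Fintype U] [Fintype V]

/-- `U`-marginal of a joint pmf on `U × V`. -/
def margU (p : U × V → ℝ) : U → ℝ := fun u => ∑ v, p (u, v)

/-- `V`-marginal of a joint pmf on `U × V`. -/
def margV (p : U × V → ℝ) : V → ℝ := fun v => ∑ u, p (u, v)

/-- Conditional pmf of `V` given `U`. -/
def condVU (p : U × V → ℝ) (u : U) (v : V) : ℝ := p (u, v) / margU p u

/-- The weakly typical set `A^n_ε(U)` with respect to a pmf `p`. -/
def typicalSet {α : Type*} [Fintype α] (p : α → ℝ) (n : ℕ) (ε : ℝ) :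
    Set (Fin n → α) :=
  {u | 0 < seqProb p u ∧ |(-(1 / (n : ℝ)) * logb 2 (seqProb p u)) - ent p| ≤ ε}

/-- The jointly typical set `A^n_ε(UV)` with respect to a joint pmf `p`. -/
def jointTypicalSet (p : U × V → ℝ) (n : ℕ) (ε : ℝ) :
    Set ((Fin n → U) × (Fin n → V)) :=
  {uv | 0 < seqProb (margU p) uv.1 ∧ 0 < seqProb (margV p) uv.2 ∧
    0 < seqProb p (fun i => (uv.1 i, uv.2 i)) ∧
    |(-(1 / (n : ℝ)) * logb 2 (seqProb (margU p) uv.1)) - ent (margU p)| ≤ ε ∧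
    |(-(1 / (n : ℝ)) * logb 2 (seqProb (margV p) uv.2)) - ent (margV p)| ≤ ε ∧
    |(-(1 / (n : ℝ)) * logb 2 (seqProb p (fun i => (uv.1 i, uv.2 i)))) - ent p| ≤ ε}

/-- The B-typical set `B^n_{V,ε}(U)`. -/
def BtypicalSet (p : U × V → ℝ) (n : ℕ) (ε : ℝ) : Set (Fin n → U) :=
  {u | u ∈ typicalSet (margU p) n ε ∧
    1 - ε ≤ ∑ v : Fin n → V,
      if (u, v) ∈ jointTypicalSet p n ε then ∏ i, condVU p (u i) (v i) else 0}

/-! ### Auxiliary lemmas -/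

lemma sum_prod_eq_prod_sum {α : Type*} [Fintype α] (n : ℕ) (g : Fin n → α → ℝ) :
    ∑ u : Fin n → α, ∏ i, g i (u i) = ∏ i, ∑ a, g i a := by
  rw [Finset.prod_univ_sum, ← Fintype.piFinset_univ]

lemma cov_term {α : Type*} [Fintype α] (n : ℕ) (w X : α → ℝ)
    (hw1 : ∑ a, w a = 1) (hX : ∑ a, w a * X a = 0) (i j : Fin n) :
    ∑ u : Fin n → α, (∏ k, w (u k)) * (X (u i) * X (u j)) =
      if i = j then ∑ a, w a * X a ^ 2 else 0 := by
  have hexp : ∀ u : Fin n → α,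
      (∏ k, w (u k)) * (X (u i) * X (u j)) =
      ∏ k, (fun k (a : α) => w a * ((if k = i then X a else 1) * (if k = j then X a else 1))) k (u k) := by
    intro u
    simp only []
    rw [Finset.prod_mul_distrib, Finset.prod_mul_distrib]
    congr 1
    rw [Finset.prod_ite_eq' Finset.univ i (fun k => X (u k)),
        Finset.prod_ite_eq' Finset.univ j (fun k => X (u k))]
    simp
  simp only [hexp]
  rw [sum_prod_eq_prod_sum n (fun k (a : α) => w a * ((if k = i then X a else 1) * (if k = j then X a else 1)))]
  by_cases hij : i = j
  · subst hij
    simp only [if_pos rfl]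
    have h2 : ∀ k : Fin n, (∑ a, w a * ((if k = i then X a else 1) * (if k = i then X a else 1)))
        = if k = i then ∑ a, w a * X a ^ 2 else 1 := by
      intro k
      by_cases h : k = i <;> simp [h, hw1, sq, mul_assoc]
    simp only [h2]
    rw [Finset.prod_ite_eq' Finset.univ i]
    simp
  · rw [if_neg hij]
    apply Finset.prod_eq_zero (Finset.mem_univ i)
    simp only [if_pos rfl, if_neg hij]
    simpa [mul_comm] using hX

lemma second_moment {α : Type*} [Fintype α] (n : ℕ) (w X : α → ℝ)
    (hw1 : ∑ a, w a = 1) (hX : ∑ a, w a * X a = 0) :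
    ∑ u : Fin n → α, (∏ k, w (u k)) * (∑ i, X (u i)) ^ 2
      = n * ∑ a, w a * X a ^ 2 := by
  have h : ∀ u : Fin n → α, (∏ k, w (u k)) * (∑ i, X (u i)) ^ 2
      = ∑ i : Fin n, ∑ j : Fin n, (∏ k, w (u k)) * (X (u i) * X (u j)) := by
    intro u
    rw [sq, Finset.sum_mul_sum, Finset.mul_sum]
    congr 1; funext i
    rw [Finset.mul_sum]
  simp only [h]
  rw [Finset.sum_comm]
  have h2 : ∀ i : Fin n, ∑ u : Fin n → α, ∑ j : Fin n, (∏ k, w (u k)) * (X (u i) * X (u j))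
      = ∑ j : Fin n, ∑ u : Fin n → α, (∏ k, w (u k)) * (X (u i) * X (u j)) := by
    intro i; exact Finset.sum_comm
  simp only [h2, cov_term n w X hw1 hX]
  simp [Finset.card_univ, mul_comm]

lemma chebyshev {α : Type*} [Fintype α] (w f : α → ℝ) (hw0 : ∀ a, 0 ≤ w a)
    (hw1 : ∑ a, w a = 1) (n : ℕ) (hn : 0 < n) (t : ℝ) (ht : 0 < t) :
    ∑ u ∈ Finset.univ.filter
        (fun u : Fin n → α => (n : ℝ) * t < |(∑ i, f (u i)) - n * (∑ a, w a * f a)|),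
      ∏ k, w (u k)
    ≤ (∑ a, w a * (f a - ∑ b, w b * f b) ^ 2) / ((n : ℝ) * t ^ 2) := by
  set μ := ∑ a, w a * f a with hμ
  set X := fun a => f a - μ with hXdef
  have hX : ∑ a, w a * X a = 0 := by
    simp only [hXdef, mul_sub, Finset.sum_sub_distrib, ← Finset.sum_mul, hw1]
    ring
  have hnR : (0:ℝ) < n := by exact_mod_cast hn
  have hnt : (0:ℝ) < ((n:ℝ)*t)^2 := by positivity
  have hsum : ∀ u : Fin n → α, (∑ i, X (u i)) = (∑ i, f (u i)) - n * μ := by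
    intro u
    simp [hXdef, Finset.sum_sub_distrib, Finset.card_univ, mul_comm]
  have hw0' : ∀ u : Fin n → α, 0 ≤ ∏ k, w (u k) := fun u =>
    Finset.prod_nonneg (fun k _ => hw0 _)
  have step1 : ∑ u ∈ Finset.univ.filter
        (fun u : Fin n → α => (n : ℝ) * t < |(∑ i, f (u i)) - n * μ|),
      ∏ k, w (u k)
      ≤ ∑ u : Fin n → α, (∏ k, w (u k)) * ((∑ i, X (u i)) ^ 2 / ((n:ℝ)*t)^2) := by
    have stepA : ∑ u ∈ Finset.univ.filter
          (fun u : Fin n → α => (n : ℝ) * t < |(∑ i, f (u i)) - n * μ|), ∏ k, w (u k)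
        ≤ ∑ u ∈ Finset.univ.filter
          (fun u : Fin n → α => (n : ℝ) * t < |(∑ i, f (u i)) - n * μ|),
            (∏ k, w (u k)) * ((∑ i, X (u i)) ^ 2 / ((n:ℝ)*t)^2) := by
      apply Finset.sum_le_sum
      intro u hu
      rw [Finset.mem_filter] at hu
      have h1 : ((n:ℝ)*t)^2 ≤ (∑ i, X (u i))^2 := by
        rw [hsum u]
        calc ((n:ℝ)*t)^2 ≤ |(∑ i, f (u i)) - n * μ|^2 := by
              apply pow_le_pow_left₀ (by positivity) (le_of_lt hu.2)
          _ = _ := by rw [sq_abs]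
      have h2 : (1:ℝ) ≤ (∑ i, X (u i)) ^ 2 / ((n:ℝ)*t)^2 := (one_le_div hnt).mpr h1
      exact le_mul_of_one_le_right (hw0' u) h2
    refine stepA.trans ?_
    apply Finset.sum_le_sum_of_subset_of_nonneg (Finset.filter_subset _ _)
    intro u _ _; exact mul_nonneg (hw0' u) (by positivity)
  refine step1.trans ?_
  have heq : ∑ u : Fin n → α, (∏ k, w (u k)) * ((∑ i, X (u i)) ^ 2 / ((n:ℝ)*t)^2)
      = (n * ∑ a, w a * X a ^ 2) / ((n:ℝ)*t)^2 := by
    rw [← second_moment n w X hw1 hX, Finset.sum_div]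
    congr 1; funext u; rw [mul_div_assoc]
  rw [heq]
  rw [div_le_div_iff₀ (by positivity) (by positivity)]
  apply le_of_eq
  ring

lemma neg_logb_prod {n : ℕ} (g : Fin n → ℝ) (h : ∀ i, 0 < g i) :
    -(logb 2 (∏ i, g i)) = ∑ i, -(logb 2 (g i)) := by
  rw [Real.logb_prod _ _ (fun i _ => (h i).ne')]
  simp

lemma prod_pos_factors {n : ℕ} {g : Fin n → ℝ} (h0 : ∀ i, 0 ≤ g i)
    (hp : 0 < ∏ i, g i) (i : Fin n) : 0 < g i := by
  rcases lt_or_eq_of_le (h0 i) with h | h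
  · exact h
  · exfalso
    rw [Finset.prod_eq_zero (Finset.mem_univ i) h.symm] at hp
    exact lt_irrefl 0 hp

lemma abs_scale_iff {n : ℕ} (hn : (0:ℝ) < n) (L H ε : ℝ) :
    (n:ℝ) * ε < |-L - (n:ℝ) * H| ↔ ε < |(-(1/(n:ℝ))) * L - H| := by
  have h : (-(1/(n:ℝ))) * L - H = (-L - (n:ℝ)*H) / n := by field_simp
  rw [h, abs_div, abs_of_pos hn, lt_div_iff₀ hn, mul_comm]

lemma sum_union_le_add {α : Type*} [DecidableEq α] (s t : Finset α) (f : α → ℝ)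
    (hf : ∀ a, 0 ≤ f a) : ∑ a ∈ s ∪ t, f a ≤ ∑ a ∈ s, f a + ∑ a ∈ t, f a := by
  have h1 : ∑ a ∈ s ∪ t, f a + ∑ a ∈ s ∩ t, f a = ∑ a ∈ s, f a + ∑ a ∈ t, f a :=
    Finset.sum_union_inter
  have h2 : 0 ≤ ∑ a ∈ s ∩ t, f a := Finset.sum_nonneg (fun a _ => hf a)
  linarith

/-- The sum of variances of the three typicality statistics. -/
def var3 (p : U × V → ℝ) : ℝ :=
  (∑ x : U × V, p x * (-(logb 2 (margU p x.1)) - ent (margU p)) ^ 2)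
  + (∑ x : U × V, p x * (-(logb 2 (margV p x.2)) - ent (margV p)) ^ 2)
  + (∑ x : U × V, p x * (-(logb 2 (p x)) - ent p) ^ 2)

lemma var3_nonneg (p : U × V → ℝ) (hp0 : ∀ x, 0 ≤ p x) : 0 ≤ var3 p := by
  have h : ∀ g : U × V → ℝ, 0 ≤ ∑ x : U × V, p x * (g x) ^ 2 := fun g =>
    Finset.sum_nonneg (fun x _ => mul_nonneg (hp0 x) (sq_nonneg _))
  have h1 := h (fun x => -(logb 2 (margU p x.1)) - ent (margU p))
  have h2 := h (fun x => -(logb 2 (margV p x.2)) - ent (margV p))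
  have h3 := h (fun x => -(logb 2 (p x)) - ent p)
  unfold var3; linarith


lemma mean1 (p : U × V → ℝ) :
    ∑ x : U × V, p x * -(logb 2 (margU p x.1)) = ent (margU p) := by
  rw [Fintype.sum_prod_type]
  have h : ∀ u : U, ∑ v, p (u, v) * -(logb 2 (margU p u))
      = margU p u * -(logb 2 (margU p u)) := by
    intro u; rw [← Finset.sum_mul]; rfl
  rw [Finset.sum_congr rfl (fun u _ => h u), ent, ← Finset.sum_neg_distrib]
  exact Finset.sum_congr rfl (fun u _ => by rw [mul_neg])

lemma mean2 (p : U × V → ℝ) :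
    ∑ x : U × V, p x * -(logb 2 (margV p x.2)) = ent (margV p) := by
  rw [Fintype.sum_prod_type_right]
  have h : ∀ v : V, ∑ u, p (u, v) * -(logb 2 (margV p v))
      = margV p v * -(logb 2 (margV p v)) := by
    intro v; rw [← Finset.sum_mul]; rfl
  rw [Finset.sum_congr rfl (fun v _ => h v), ent, ← Finset.sum_neg_distrib]
  exact Finset.sum_congr rfl (fun v _ => by rw [mul_neg])

lemma mean3 (p : U × V → ℝ) :
    ∑ x : U × V, p x * -(logb 2 (p x)) = ent p := by
  rw [ent, ← Finset.sum_neg_distrib]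
  exact Finset.sum_congr rfl (fun x _ => by rw [mul_neg])

lemma marg_ge (p : U × V → ℝ) (hp0 : ∀ x, 0 ≤ p x) (x : U × V) :
    p x ≤ margU p x.1 := by
  have : p (x.1, x.2) ≤ ∑ v, p (x.1, v) :=
    Finset.single_le_sum (fun v _ => hp0 _) (Finset.mem_univ x.2)
  simpa [margU] using this

lemma margV_ge (p : U × V → ℝ) (hp0 : ∀ x, 0 ≤ p x) (x : U × V) :
    p x ≤ margV p x.2 := by
  have : p (x.1, x.2) ≤ ∑ u, p (u, x.2) :=
    Finset.single_le_sum (f := fun u => p (u, x.2)) (fun u _ => hp0 _) (Finset.mem_univ x.1)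
  simpa [margV] using this

lemma seq_factor (p : U × V → ℝ) (hp0 : ∀ x, 0 ≤ p x) {n : ℕ}
    (u : Fin n → U) (v : Fin n → V) :
    seqProb p (fun i => (u i, v i)) =
      seqProb (margU p) u * ∏ i, condVU p (u i) (v i) := by
  unfold seqProb
  rw [← Finset.prod_mul_distrib]
  apply Finset.prod_congr rfl
  intro i _
  by_cases h : margU p (u i) = 0
  · have hle : p (u i, v i) ≤ margU p (u i) := marg_ge p hp0 (u i, v i)
    have : p (u i, v i) = 0 := le_antisymm (h ▸ hle) (hp0 _)
    simp [condVU, this, h]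
  · rw [condVU, mul_comm, div_mul_cancel₀ _ h]


lemma bad_prob (p : U × V → ℝ) (hp0 : ∀ x, 0 ≤ p x) (hp1 : ∑ x, p x = 1)
    {n : ℕ} (hn : 0 < n) {t : ℝ} (ht : 0 < t) :
    ∑ x ∈ Finset.univ.filter (fun x : Fin n → U × V =>
        ((fun i => (x i).1, fun i => (x i).2) ∉ jointTypicalSet p n t)),
      seqProb p x ≤ var3 p / ((n : ℝ) * t ^ 2) := by
  classical
  have hnR : (0:ℝ) < n := by exact_mod_cast hn
  set bad1 := Finset.univ.filter (fun x : Fin n → U × V =>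
    (n:ℝ)*t < |(∑ i, -(logb 2 (margU p ((x i).1)))) - n * ent (margU p)|) with hb1
  set bad2 := Finset.univ.filter (fun x : Fin n → U × V =>
    (n:ℝ)*t < |(∑ i, -(logb 2 (margV p ((x i).2)))) - n * ent (margV p)|) with hb2
  set bad3 := Finset.univ.filter (fun x : Fin n → U × V =>
    (n:ℝ)*t < |(∑ i, -(logb 2 (p (x i)))) - n * ent p|) with hb3
  have hc1 : ∑ x ∈ bad1, seqProb p x
      ≤ (∑ a : U × V, p a * (-(logb 2 (margU p a.1)) - ent (margU p)) ^ 2) / ((n:ℝ) * t^2) := by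
    have h := chebyshev p (fun x : U × V => -(logb 2 (margU p x.1))) hp0 hp1 n hn t ht
    beta_reduce at h
    rw [mean1] at h
    exact h
  have hc2 : ∑ x ∈ bad2, seqProb p x
      ≤ (∑ a : U × V, p a * (-(logb 2 (margV p a.2)) - ent (margV p)) ^ 2) / ((n:ℝ) * t^2) := by
    have h := chebyshev p (fun x : U × V => -(logb 2 (margV p x.2))) hp0 hp1 n hn t ht
    beta_reduce at h
    rw [mean2] at h
    exact h
  have hc3 : ∑ x ∈ bad3, seqProb p x
      ≤ (∑ a : U × V, p a * (-(logb 2 (p a)) - ent p) ^ 2) / ((n:ℝ) * t^2) := by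
    have h := chebyshev p (fun x : U × V => -(logb 2 (p x))) hp0 hp1 n hn t ht
    beta_reduce at h
    rw [mean3] at h
    exact h
  have hnn : ∀ x : Fin n → U × V, 0 ≤ seqProb p x := fun x =>
    Finset.prod_nonneg (fun i _ => hp0 _)
  have key : Finset.univ.filter (fun x : Fin n → U × V =>
      ((fun i => (x i).1, fun i => (x i).2) ∉ jointTypicalSet p n t) ∧ 0 < seqProb p x)
      ⊆ bad1 ∪ bad2 ∪ bad3 := by
    intro x hx
    rw [Finset.mem_filter] at hx
    obtain ⟨-, hnt, hpos⟩ := hx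
    have hpos' : ∀ i, 0 < p (x i) := fun i => prod_pos_factors (fun j => hp0 _) hpos i
    have hqU : ∀ i, 0 < margU p ((x i).1) := fun i =>
      lt_of_lt_of_le (hpos' i) (marg_ge p hp0 (x i))
    have hqV : ∀ i, 0 < margV p ((x i).2) := fun i =>
      lt_of_lt_of_le (hpos' i) (margV_ge p hp0 (x i))
    have hP1 : 0 < seqProb (margU p) (fun i => (x i).1) :=
      Finset.prod_pos (fun i _ => hqU i)
    have hP2 : 0 < seqProb (margV p) (fun i => (x i).2) :=
      Finset.prod_pos (fun i _ => hqV i)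
    have hP3 : 0 < seqProb p (fun i => ((x i).1, (x i).2)) := hpos
    have hL1 : -(logb 2 (seqProb (margU p) (fun i => (x i).1)))
        = ∑ i, -(logb 2 (margU p ((x i).1))) := neg_logb_prod _ hqU
    have hL2 : -(logb 2 (seqProb (margV p) (fun i => (x i).2)))
        = ∑ i, -(logb 2 (margV p ((x i).2))) := neg_logb_prod _ hqV
    have hL3 : -(logb 2 (seqProb p x)) = ∑ i, -(logb 2 (p (x i))) :=
      neg_logb_prod _ hpos'
    by_contra hcon
    simp only [Finset.mem_union, not_or, hb1, hb2, hb3, Finset.mem_filter,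
      Finset.mem_univ, true_and, not_lt] at hcon
    obtain ⟨⟨h1, h2⟩, h3⟩ := hcon
    apply hnt
    refine ⟨hP1, hP2, hP3, ?_, ?_, ?_⟩
    · refine not_lt.mp ((not_congr (abs_scale_iff hnR _ _ t)).mp ?_)
      rw [hL1]
      exact not_lt.mpr h1
    · refine not_lt.mp ((not_congr (abs_scale_iff hnR _ _ t)).mp ?_)
      rw [hL2]
      exact not_lt.mpr h2
    · refine not_lt.mp ((not_congr (abs_scale_iff hnR _ _ t)).mp ?_)
      rw [hL3]
      exact not_lt.mpr h3
  have hsplit : ∑ x ∈ Finset.univ.filter (fun x : Fin n → U × V =>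
        ((fun i => (x i).1, fun i => (x i).2) ∉ jointTypicalSet p n t)), seqProb p x
      = ∑ x ∈ Finset.univ.filter (fun x : Fin n → U × V =>
        ((fun i => (x i).1, fun i => (x i).2) ∉ jointTypicalSet p n t) ∧ 0 < seqProb p x),
        seqProb p x := by
    symm
    apply Finset.sum_subset
    · intro x hx
      rw [Finset.mem_filter] at hx ⊢
      exact ⟨hx.1, hx.2.1⟩
    · intro x hx hxn
      rw [Finset.mem_filter] at hx
      have h0 : ¬ (0 < seqProb p x) := fun hp' =>
        hxn (Finset.mem_filter.mpr ⟨hx.1, hx.2, hp'⟩)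
      exact le_antisymm (not_lt.mp h0) (hnn x)
  rw [hsplit]
  have step2 : ∑ x ∈ Finset.univ.filter (fun x : Fin n → U × V =>
        ((fun i => (x i).1, fun i => (x i).2) ∉ jointTypicalSet p n t) ∧ 0 < seqProb p x),
        seqProb p x ≤ ∑ x ∈ bad1 ∪ bad2 ∪ bad3, seqProb p x :=
    Finset.sum_le_sum_of_subset_of_nonneg key (fun x _ _ => hnn x)
  refine step2.trans ?_
  have step3 : ∑ x ∈ bad1 ∪ bad2 ∪ bad3, seqProb p x
      ≤ ∑ x ∈ bad1, seqProb p x + ∑ x ∈ bad2, seqProb p x + ∑ x ∈ bad3, seqProb p x := by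
    have hA := sum_union_le_add (bad1 ∪ bad2) bad3 (seqProb p) hnn
    have hB := sum_union_le_add bad1 bad2 (seqProb p) hnn
    linarith
  refine step3.trans ?_
  unfold var3
  rw [add_div, add_div]
  linarith

lemma PB_half (p : U × V → ℝ) (hp0 : ∀ x, 0 ≤ p x) (hp1 : ∑ x, p x = 1)
    {n : ℕ} (hn : 0 < n) {t : ℝ} (ht : 0 < t) (ht2 : t ≤ 1/2)
    (hvar : var3 p / ((n : ℝ) * t ^ 2) ≤ t / 2) :
    1/2 ≤ ∑ u' : Fin n → U,
      if u' ∈ BtypicalSet p n t then seqProb (margU p) u' else 0 := by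
  classical
  have hqU0 : ∀ a, 0 ≤ margU p a := fun a => Finset.sum_nonneg fun v _ => hp0 _
  have hqU1 : ∑ a, margU p a = 1 := by
    rw [← hp1, Fintype.sum_prod_type]; rfl
  have htotU : ∑ u' : Fin n → U, seqProb (margU p) u' = 1 := by
    have h := sum_prod_eq_prod_sum n (fun _ a => margU p a)
    simp only [seqProb]
    rw [h]
    simp [hqU1]
  have htot : ∑ x : Fin n → U × V, seqProb p x = 1 := by
    have h := sum_prod_eq_prod_sum n (fun _ (a : U × V) => p a)
    simp only [seqProb]
    rw [h]
    simp [hp1]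
  have hnn : ∀ x : Fin n → U × V, 0 ≤ seqProb p x := fun x =>
    Finset.prod_nonneg (fun i _ => hp0 _)
  set PG := ∑ x : Fin n → U × V,
      if ((fun i => (x i).1, fun i => (x i).2) ∈ jointTypicalSet p n t)
      then seqProb p x else 0 with hPGdef
  have hPG_ge : 1 - t/2 ≤ PG := by
    have hcompl : PG + ∑ x : Fin n → U × V,
        (if ((fun i => (x i).1, fun i => (x i).2) ∉ jointTypicalSet p n t)
         then seqProb p x else 0) = 1 := by
      rw [hPGdef, ← Finset.sum_add_distrib, ← htot]
      apply Finset.sum_congr rfl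
      intro x _
      by_cases h : ((fun i => (x i).1, fun i => (x i).2) ∈ jointTypicalSet p n t) <;> simp [h]
    have hbad : ∑ x : Fin n → U × V,
        (if ((fun i => (x i).1, fun i => (x i).2) ∉ jointTypicalSet p n t)
         then seqProb p x else 0) ≤ t/2 := by
      rw [← Finset.sum_filter]
      exact (bad_prob p hp0 hp1 hn ht).trans hvar
    linarith
  have hpairs : PG = ∑ uv : (Fin n → U) × (Fin n → V),
      (if uv ∈ jointTypicalSet p n t
       then seqProb p (fun i => (uv.1 i, uv.2 i)) else 0) := by
    rw [hPGdef]
    exact Fintype.sum_equiv (Equiv.arrowProdEquivProdArrow (Fin n) (fun _ => U) (fun _ => V)) _ _ (fun x => rfl)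
  set g : (Fin n → U) → ℝ := fun u' => ∑ v : Fin n → V,
      if (u', v) ∈ jointTypicalSet p n t then ∏ i, condVU p (u' i) (v i) else 0 with hg
  have hdecomp : ∑ uv : (Fin n → U) × (Fin n → V),
      (if uv ∈ jointTypicalSet p n t
       then seqProb p (fun i => (uv.1 i, uv.2 i)) else 0)
      = ∑ u' : Fin n → U, seqProb (margU p) u' * g u' := by
    rw [Fintype.sum_prod_type]
    apply Finset.sum_congr rfl
    intro u' _
    rw [hg, Finset.mul_sum]
    apply Finset.sum_congr rfl
    intro v _
    by_cases h : (u', v) ∈ jointTypicalSet p n t <;>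
      simp [h, seq_factor p hp0 u' v]
  have hcond0 : ∀ a b, 0 ≤ condVU p a b := fun a b => div_nonneg (hp0 _) (hqU0 a)
  have hg1 : ∀ u', g u' ≤ 1 := by
    intro u'
    have step : g u' ≤ ∑ v : Fin n → V, ∏ i, condVU p (u' i) (v i) := by
      apply Finset.sum_le_sum
      intro v _
      split_ifs with h
      · exact le_rfl
      · exact Finset.prod_nonneg fun i _ => hcond0 _ _
    refine step.trans ?_
    rw [sum_prod_eq_prod_sum n (fun i b => condVU p (u' i) b)]
    apply Finset.prod_le_one
    · intro i _; exact Finset.sum_nonneg fun b _ => hcond0 _ _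
    · intro i _
      have hdiv : ∑ b, condVU p (u' i) b = margU p (u' i) / margU p (u' i) := by
        simp only [condVU]
        rw [← Finset.sum_div]
        rfl
      rw [hdiv]
      by_cases h : margU p (u' i) = 0
      · simp [h]
      · rw [div_self h]
  have hgz : ∀ u', u' ∉ typicalSet (margU p) n t → g u' = 0 := by
    intro u' h
    apply Finset.sum_eq_zero
    intro v _
    rw [if_neg]
    intro hjt
    exact h ⟨hjt.1, hjt.2.2.2.1⟩
  set PB := ∑ u' : Fin n → U,
      if u' ∈ BtypicalSet p n t then seqProb (margU p) u' else 0 with hPBdef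
  have hup : ∑ u' : Fin n → U, seqProb (margU p) u' * g u' ≤ (1 - t) + t * PB := by
    have hterm : ∀ u' : Fin n → U, seqProb (margU p) u' * g u'
        ≤ (1 - t) * seqProb (margU p) u'
          + t * (if u' ∈ BtypicalSet p n t then seqProb (margU p) u' else 0) := by
      intro u'
      have hs0 : 0 ≤ seqProb (margU p) u' := Finset.prod_nonneg fun i _ => hqU0 _
      by_cases hB : u' ∈ BtypicalSet p n t
      · rw [if_pos hB]
        have h1 : seqProb (margU p) u' * g u' ≤ seqProb (margU p) u' * 1 :=
          mul_le_mul_of_nonneg_left (hg1 u') hs0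
        rw [mul_one] at h1
        linarith
      · rw [if_neg hB, mul_zero, add_zero]
        by_cases htyp : u' ∈ typicalSet (margU p) n t
        · have hglt : g u' < 1 - t := by
            by_contra hge
            push_neg at hge
            exact hB ⟨htyp, hge⟩
          have h1 := mul_le_mul_of_nonneg_left (le_of_lt hglt) hs0
          linarith [h1]
        · rw [hgz u' htyp, mul_zero]
          exact mul_nonneg (by linarith) hs0
    calc ∑ u' : Fin n → U, seqProb (margU p) u' * g u'
        ≤ ∑ u' : Fin n → U, ((1 - t) * seqProb (margU p) u'
            + t * (if u' ∈ BtypicalSet p n t then seqProb (margU p) u' else 0)) :=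
          Finset.sum_le_sum (fun u' _ => hterm u')
      _ = (1 - t) * (∑ u' : Fin n → U, seqProb (margU p) u') + t * PB := by
          rw [Finset.sum_add_distrib, ← Finset.mul_sum, ← Finset.mul_sum, hPBdef]
      _ = (1 - t) + t * PB := by rw [htotU, mul_one]
  have hchain : 1 - t/2 ≤ (1 - t) + t * PB := by
    calc 1 - t/2 ≤ PG := hPG_ge
      _ = ∑ u' : Fin n → U, seqProb (margU p) u' * g u' := by rw [hpairs, hdecomp]
      _ ≤ (1 - t) + t * PB := hup
  have h2 : t * (1/2) ≤ t * PB := by linarith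
  exact le_of_mul_le_mul_left h2 ht

lemma jt_mono (p : U × V → ℝ) {n : ℕ} {t1 t2 : ℝ} (h : t1 ≤ t2) :
    jointTypicalSet p n t1 ⊆ jointTypicalSet p n t2 := fun uv h' =>
  ⟨h'.1, h'.2.1, h'.2.2.1, h'.2.2.2.1.trans h, h'.2.2.2.2.1.trans h, h'.2.2.2.2.2.trans h⟩

lemma B_mono (p : U × V → ℝ) (hp0 : ∀ x, 0 ≤ p x) {n : ℕ} {t1 t2 : ℝ} (h : t1 ≤ t2) :
    BtypicalSet p n t1 ⊆ BtypicalSet p n t2 := by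
  intro u hu
  obtain ⟨⟨hpos, habs⟩, hsum⟩ := hu
  have hqU0 : ∀ a, 0 ≤ margU p a := fun a => Finset.sum_nonneg fun v _ => hp0 _
  refine ⟨⟨hpos, habs.trans h⟩, ?_⟩
  have hmono : ∑ v : Fin n → V,
      (if (u, v) ∈ jointTypicalSet p n t1 then ∏ i, condVU p (u i) (v i) else 0)
      ≤ ∑ v : Fin n → V,
      (if (u, v) ∈ jointTypicalSet p n t2 then ∏ i, condVU p (u i) (v i) else 0) := by
    apply Finset.sum_le_sum
    intro v _
    split_ifs with h1 h2
    · exact le_rfl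
    · exact absurd (jt_mono p h h1) h2
    · exact Finset.prod_nonneg fun i _ => div_nonneg (hp0 _) (hqU0 _)
    · exact le_rfl
  have : (1:ℝ) - t2 ≤ 1 - t1 := by linarith
  exact le_trans this (le_trans hsum hmono)

lemma seqProb_le_of_typical {α : Type*} [Fintype α] (q : α → ℝ) {n : ℕ}
    (hn : (0:ℝ) < n) {t : ℝ} {u : Fin n → α} (h : u ∈ typicalSet q n t) :
    seqProb q u ≤ (2:ℝ) ^ (-((n:ℝ) * (ent q - t))) := by
  obtain ⟨hpos, habs⟩ := h
  set L := logb 2 (seqProb q u) with hLdef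
  have h1 : ent q - t ≤ -(1/(n:ℝ)) * L := by
    have := (abs_le.mp habs).1
    linarith
  have hL : L ≤ -((n:ℝ) * (ent q - t)) := by
    have h2 := mul_le_mul_of_nonneg_left h1 (le_of_lt hn)
    have h3 : (n:ℝ) * (-(1/(n:ℝ)) * L) = -L := by field_simp
    rw [h3] at h2
    linarith
  calc seqProb q u = (2:ℝ) ^ L := (Real.rpow_logb (by norm_num) (by norm_num) hpos).symm
    _ ≤ _ := (Real.rpow_le_rpow_left_iff (by norm_num : (1:ℝ) < 2)).mpr hL

lemma seqProb_ge_of_typical {α : Type*} [Fintype α] (q : α → ℝ) {n : ℕ}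
    (hn : (0:ℝ) < n) {t : ℝ} {u : Fin n → α} (h : u ∈ typicalSet q n t) :
    (2:ℝ) ^ (-((n:ℝ) * (ent q + t))) ≤ seqProb q u := by
  obtain ⟨hpos, habs⟩ := h
  set L := logb 2 (seqProb q u) with hLdef
  have h1 : -(1/(n:ℝ)) * L ≤ ent q + t := by
    have := (abs_le.mp habs).2
    linarith
  have hL : -((n:ℝ) * (ent q + t)) ≤ L := by
    have h2 := mul_le_mul_of_nonneg_left h1 (le_of_lt hn)
    have h3 : (n:ℝ) * (-(1/(n:ℝ)) * L) = -L := by field_simp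
    rw [h3] at h2
    linarith
  calc (2:ℝ) ^ (-((n:ℝ) * (ent q + t)))
      ≤ (2:ℝ) ^ L := (Real.rpow_le_rpow_left_iff (by norm_num : (1:ℝ) < 2)).mpr hL
    _ = seqProb q u := Real.rpow_logb (by norm_num) (by norm_num) hpos
/-- **Reciprocal-cardinality bound for B-typical sets**: for every `ε > 0` there exists
`N` such that for all `n ≥ N` and every `u ∈ B^n_{V,ε}(U)`,
`1/|B^n_{V,ε}(U)| ≤ 2^{3nε}·p(u)`. -/
theorem B_typical_inv_card_le
    (p : U × V → ℝ) (hp0 : ∀ x, 0 ≤ p x) (hp1 : ∑ x, p x = 1)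
    (ε : ℝ) (hε : 0 < ε) :
    ∃ N : ℕ, ∀ n : ℕ, N ≤ n → ∀ u : Fin n → U, u ∈ BtypicalSet p n ε →
      1 / ((BtypicalSet p n ε).ncard : ℝ) ≤
        (2 : ℝ) ^ (3 * (n : ℝ) * ε) * seqProb (margU p) u := by
  classical
  set t := min ε (1/2) with htdef
  have ht : 0 < t := lt_min hε (by norm_num)
  have htε : t ≤ ε := min_le_left _ _
  have ht2 : t ≤ 1/2 := min_le_right _ _
  refine ⟨max (Nat.ceil (2 * var3 p / t^3) + 1) (Nat.ceil (1/ε) + 1), ?_⟩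
  intro n hn u hu
  have hn1 : 0 < n :=
    lt_of_lt_of_le (Nat.lt_of_lt_of_le (Nat.succ_pos _) (le_max_right _ _)) hn
  have hnR : (0:ℝ) < n := by exact_mod_cast hn1
  have hna : (Nat.ceil (2 * var3 p / t^3) + 1 : ℕ) ≤ n := le_trans (le_max_left _ _) hn
  have hnb : (Nat.ceil (1/ε) + 1 : ℕ) ≤ n := le_trans (le_max_right _ _) hn
  have hvarn : 2 * var3 p / t^3 ≤ (n:ℝ) := by
    calc 2 * var3 p / t^3 ≤ (Nat.ceil (2*var3 p / t^3) : ℝ) := Nat.le_ceil _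
      _ ≤ (n:ℝ) := by exact_mod_cast le_trans (Nat.le_succ _) hna
  have hvar : var3 p / ((n:ℝ) * t^2) ≤ t/2 := by
    rw [div_le_iff₀ (by positivity)]
    rw [div_le_iff₀ (by positivity)] at hvarn
    nlinarith [hvarn]
  have hnε : 1 ≤ (n:ℝ) * ε := by
    have h1 : 1/ε ≤ (n:ℝ) := by
      calc 1/ε ≤ (Nat.ceil (1/ε) : ℝ) := Nat.le_ceil _
        _ ≤ (n:ℝ) := by exact_mod_cast le_trans (Nat.le_succ _) hnb
    rw [div_le_iff₀ hε] at h1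
    linarith
  have hPB := PB_half p hp0 hp1 hn1 ht ht2 hvar
  set Hq := ent (margU p) with hHq
  set M := (2:ℝ) ^ (-((n:ℝ) * (Hq - t))) with hM
  have hMpos : 0 < M := Real.rpow_pos_of_pos (by norm_num) _
  set F := Finset.univ.filter (fun u' : Fin n → U => u' ∈ BtypicalSet p n t) with hF
  have hPBF : ∑ u' : Fin n → U,
      (if u' ∈ BtypicalSet p n t then seqProb (margU p) u' else 0)
      = ∑ u' ∈ F, seqProb (margU p) u' := (Finset.sum_filter _ _).symm
  have hub : ∀ u' ∈ F, seqProb (margU p) u' ≤ M := by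
    intro u' hu'
    rw [hF, Finset.mem_filter] at hu'
    exact seqProb_le_of_typical (margU p) hnR hu'.2.1
  have hcard : 1/2 ≤ (F.card : ℝ) * M := by
    calc (1:ℝ)/2 ≤ _ := hPB
      _ = ∑ u' ∈ F, seqProb (margU p) u' := hPBF
      _ ≤ (F.card : ℝ) * M := by
          have := Finset.sum_le_card_nsmul F _ M hub
          simpa [nsmul_eq_mul] using this
  have hFpos : 0 < (F.card : ℝ) := by
    by_contra hc
    push_neg at hc
    have h0 : (F.card : ℝ) * M ≤ 0 * M := mul_le_mul_of_nonneg_right hc hMpos.le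
    rw [zero_mul] at h0
    linarith
  have hncard_t : ((BtypicalSet p n t).ncard : ℕ) = F.card := by
    rw [Set.ncard_eq_toFinset_card']
    congr 1
    ext x
    simp [hF]
  have hle_card : (F.card : ℝ) ≤ ((BtypicalSet p n ε).ncard : ℝ) := by
    have := Set.ncard_le_ncard (B_mono p hp0 htε) (Set.toFinite (BtypicalSet p n ε))
    rw [hncard_t] at this
    exact_mod_cast this
  have hBpos : 0 < ((BtypicalSet p n ε).ncard : ℝ) := lt_of_lt_of_le hFpos hle_card
  have hlb : (2:ℝ) ^ (-((n:ℝ) * (Hq + ε))) ≤ seqProb (margU p) u :=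
    seqProb_ge_of_typical _ hnR hu.1
  have h1 : 1 / ((BtypicalSet p n ε).ncard : ℝ) ≤ 2 * M := by
    rw [div_le_iff₀ hBpos]
    have h2 : 1/2 ≤ ((BtypicalSet p n ε).ncard : ℝ) * M :=
      le_trans hcard (mul_le_mul_of_nonneg_right hle_card hMpos.le)
    nlinarith [h2]
  refine h1.trans ?_
  have hexp : 2 * M = (2:ℝ) ^ (1 + -((n:ℝ)*(Hq - t))) := by
    rw [Real.rpow_add (by norm_num), Real.rpow_one, hM]
  have hgoal2 : (2:ℝ) ^ (1 + -((n:ℝ)*(Hq - t)))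
      ≤ (2:ℝ) ^ (3*(n:ℝ)*ε + -((n:ℝ)*(Hq + ε))) := by
    apply (Real.rpow_le_rpow_left_iff (by norm_num : (1:ℝ) < 2)).mpr
    have hnt_le : (n:ℝ) * t ≤ (n:ℝ) * ε := mul_le_mul_of_nonneg_left htε (le_of_lt hnR)
    nlinarith [hnε, hnt_le]
  calc 2*M = (2:ℝ) ^ (1 + -((n:ℝ)*(Hq - t))) := hexp
    _ ≤ (2:ℝ) ^ (3*(n:ℝ)*ε + -((n:ℝ)*(Hq + ε))) := hgoal2
    _ = (2:ℝ)^(3*(n:ℝ)*ε) * (2:ℝ)^(-((n:ℝ)*(Hq+ε))) := Real.rpow_add (by norm_num) _ _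
    _ ≤ (2:ℝ)^(3*(n:ℝ)*ε) * seqProb (margU p) u :=
        mul_le_mul_of_nonneg_left hlb (Real.rpow_nonneg (by norm_num) _)
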